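/- If A is an algebra obtained by the Cayley-Dickson process over a field K of characteristic not 2 and the sublevel of A equals 1 (i.e., 0 is a sum of two nonzero squares in A), then the level of A is at most 2. -/

import Mathlib

/-- An algebra `A` of dimension `2 ^ t` over a field `K` obtained by the Cayley-Dickson
process: it has a basis `{1, f₂, …, f_q}`, `q = 2 ^ t` (indexed here by
`Option (Fin (2 ^ t - 1))`, with `none` corresponding to the unit `1`), such that
`fᵢ² = αᵢ • 1` for nonzero scalars `αᵢ` and `fᵢ fⱼ = -fⱼ fᵢ` for `i ≠ j`.  The
multiplication is not assumed associative, but is `K`-bilinear. -/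
structure CayleyDickson (K : Type) [Field K] (A : Type) [NonAssocRing A] [Module K A]
    (t : ℕ) : Type where
  smul_mul : ∀ (c : K) (x y : A), (c • x) * y = c • (x * y)
  mul_smul : ∀ (c : K) (x y : A), x * (c • y) = c • (x * y)
  b : Module.Basis (Option (Fin (2 ^ t - 1))) K A
  bOne : b none = 1
  α : Fin (2 ^ t - 1) → K
  α_ne_zero : ∀ i, α i ≠ 0
  sq : ∀ i, b (some i) * b (some i) = α i • (1 : A)
  anticomm : ∀ i j, i ≠ j → b (some i) * b (some j) = -(b (some j) * b (some i))

namespace CDAux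

variable {K A : Type} [Field K] [NonAssocRing A] [Module K A] {t : ℕ}

noncomputable def Qf (CD : CayleyDickson K A t) (c : Fin (2 ^ t - 1) →₀ K) : K :=
  c.sum fun i r => r ^ 2 * CD.α i

noncomputable def vf (CD : CayleyDickson K A t) (c : Fin (2 ^ t - 1) →₀ K) : A :=
  c.sum fun i r => r • CD.b (some i)

theorem Qf_smul (CD : CayleyDickson K A t) (e : K) (c : Fin (2 ^ t - 1) →₀ K) :
    Qf CD (e • c) = e ^ 2 * Qf CD c := by
  unfold Qf
  rw [Finsupp.sum_smul_index (fun i => by ring), Finsupp.mul_sum]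
  congr 1; ext i r; ring

theorem vf_smul (CD : CayleyDickson K A t) (e : K) (c : Fin (2 ^ t - 1) →₀ K) :
    vf CD (e • c) = e • vf CD c := by
  unfold vf
  rw [Finsupp.sum_smul_index (fun i => by rw [zero_smul]), Finsupp.smul_sum]
  simp_rw [mul_smul]

theorem vf_zero (CD : CayleyDickson K A t) : vf CD 0 = 0 := by
  simp [vf]

theorem Qf_zero (CD : CayleyDickson K A t) : Qf CD 0 = 0 := by
  simp [Qf]

theorem sq_vf (CD : CayleyDickson K A t) (c : Fin (2 ^ t - 1) →₀ K) :
    vf CD c * vf CD c = Qf CD c • (1 : A) := by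
  classical
  unfold vf Qf
  rw [Finsupp.sum_mul]
  simp_rw [Finsupp.mul_sum, CD.smul_mul, CD.mul_smul, smul_smul]
  unfold Finsupp.sum
  beta_reduce
  rw [← Finset.sum_product', ← Finset.diag_union_offDiag,
    Finset.sum_union (Finset.disjoint_diag_offDiag _), Finset.sum_diag]
  have hoff : ∑ p ∈ c.support.offDiag,
      (c p.1 * c p.2) • (CD.b (some p.1) * CD.b (some p.2)) = 0 := by
    refine Finset.sum_involution (fun p _ => (p.2, p.1)) ?_ ?_ ?_ ?_
    · intro p hp
      have hne : p.1 ≠ p.2 := (Finset.mem_offDiag.mp hp).2.2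
      rw [CD.anticomm _ _ hne, smul_neg, mul_comm]
      exact neg_add_cancel _
    · intro p hp _
      have hne : p.1 ≠ p.2 := (Finset.mem_offDiag.mp hp).2.2
      intro hq
      rw [Prod.ext_iff] at hq
      exact hne hq.1.symm
    · intro p hp
      have h := Finset.mem_offDiag.mp hp
      exact Finset.mem_offDiag.mpr ⟨h.2.1, h.1, h.2.2.symm⟩
    · intro p hp; rfl
  rw [hoff, add_zero, Finset.sum_smul]
  congr 1; ext i
  rw [CD.sq, smul_smul, pow_two]

theorem repr_vf (CD : CayleyDickson K A t) (c : Fin (2 ^ t - 1) →₀ K) :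
    CD.b.repr (vf CD c) = c.mapDomain some := by
  unfold vf
  rw [map_finsuppSum]
  simp_rw [map_smul, Module.Basis.repr_self, Finsupp.smul_single, smul_eq_mul, mul_one]
  rfl

theorem repr_vf_none (CD : CayleyDickson K A t) (c : Fin (2 ^ t - 1) →₀ K) :
    CD.b.repr (vf CD c) none = 0 := by
  rw [repr_vf]
  exact Finsupp.mapDomain_notin_range _ _ (by simp)

theorem repr_vf_some (CD : CayleyDickson K A t) (c : Fin (2 ^ t - 1) →₀ K)
    (i : Fin (2 ^ t - 1)) : CD.b.repr (vf CD c) (some i) = c i := by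
  rw [repr_vf]
  exact Finsupp.mapDomain_apply (Option.some_injective _) _ _

theorem repr_one (CD : CayleyDickson K A t) :
    CD.b.repr (1 : A) = Finsupp.single none 1 := by
  rw [← CD.bOne, Module.Basis.repr_self]

theorem decomp (CD : CayleyDickson K A t) (x : A) :
    x = CD.b.repr x none • 1 + vf CD (CD.b.repr x).some := by
  conv_lhs => rw [← CD.b.linearCombination_repr x]
  rw [Finsupp.linearCombination_apply, Finsupp.sum_option_index_smul, CD.bOne]
  rfl

theorem sq_full (CD : CayleyDickson K A t) (s : K) (c : Fin (2 ^ t - 1) →₀ K) :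
    (s • (1 : A) + vf CD c) * (s • (1 : A) + vf CD c)
      = (s * s + Qf CD c) • (1 : A) + (2 * s) • vf CD c := by
  simp only [mul_add, add_mul, CD.smul_mul, CD.mul_smul, one_mul, mul_one]
  rw [sq_vf]
  module

theorem sq_smul_one (CD : CayleyDickson K A t) (e : K) :
    (e • (1 : A)) * (e • (1 : A)) = (e * e) • (1 : A) := by
  rw [CD.smul_mul, CD.mul_smul, one_mul, smul_smul]

theorem sq_smul_vf (CD : CayleyDickson K A t) (e : K) (c : Fin (2 ^ t - 1) →₀ K) :
    (e • vf CD c) * (e • vf CD c) = (e ^ 2 * Qf CD c) • (1 : A) := by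
  rw [← vf_smul, sq_vf, Qf_smul]

end CDAux

open CDAux

/-- If `A` is an algebra obtained by the Cayley-Dickson process over a field
`K` of characteristic not 2 and the sublevel of `A` equals 1 (i.e. `0` is a sum of two
nonzero squares in `A`), then the level of `A` is at most 2. -/
theorem level_le_two_of_sublevel_eq_one (K A : Type) [Field K] [NonAssocRing A]
    [Module K A] (t : ℕ) (hchar : (2 : K) ≠ 0) (CD : CayleyDickson K A t)
    (h : ∃ a b : A, a * a ≠ 0 ∧ b * b ≠ 0 ∧ a * a + b * b = 0) :
    ∃ x y : A, x * x + y * y = -1 := by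
  classical
  obtain ⟨a, bb, ha, hb, hab⟩ := h
  set s : K := CD.b.repr a none with hs
  set c : Fin (2 ^ t - 1) →₀ K := (CD.b.repr a).some with hc
  set u : K := CD.b.repr bb none with hu
  set d : Fin (2 ^ t - 1) →₀ K := (CD.b.repr bb).some with hd
  have hadec : a = s • (1 : A) + vf CD c := decomp CD a
  have hbdec : bb = u • (1 : A) + vf CD d := decomp CD bb
  have haa : a * a = (s * s + Qf CD c) • (1 : A) + (2 * s) • vf CD c := by
    rw [hadec, sq_full]
  have hbb : bb * bb = (u * u + Qf CD d) • (1 : A) + (2 * u) • vf CD d := by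
    rw [hbdec, sq_full]
  have hsum : ((s * s + Qf CD c) + (u * u + Qf CD d)) • (1 : A)
      + (2 * s) • vf CD c + (2 * u) • vf CD d = 0 := by
    rw [← hab, haa, hbb]; module
  -- extract coordinate equations
  have hrepr := congrArg CD.b.repr hsum
  rw [map_add, map_add, map_smul, map_smul, map_smul, map_zero, repr_one] at hrepr
  have E1 : (s * s + Qf CD c) + (u * u + Qf CD d) = 0 := by
    have := congrArg (fun f => f none) hrepr
    simpa [repr_vf_none] using this
  have E2 : ∀ i, s * c i + u * d i = 0 := by
    intro i
    have := congrArg (fun f => f (some i)) hrepr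
    simp [repr_vf_some, Finsupp.single_apply] at this
    have h2 : 2 * (s * c i + u * d i) = 0 := by linear_combination this
    rcases mul_eq_zero.mp h2 with h | h
    · exact absurd h hchar
    · exact h
  by_cases hs0 : s = 0
  · by_cases hu0 : u = 0
    · -- both pure parts; Qc ≠ 0, Qd = -Qc
      have hQc : Qf CD c ≠ 0 := by
        intro h0
        apply ha
        rw [haa, hs0, h0]
        simp
      have hQd : Qf CD d = -Qf CD c := by
        rw [hs0, hu0] at E1; linear_combination E1
      set lam := Qf CD c with hlam
      refine ⟨((-1 / lam + 1) / 2) • vf CD c, ((-1 / lam - 1) / 2) • vf CD d, ?_⟩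
      rw [sq_smul_vf, sq_smul_vf, hQd, ← add_smul]
      have : ((-1 / lam + 1) / 2) ^ 2 * lam + ((-1 / lam - 1) / 2) ^ 2 * (-lam) = -1 := by
        field_simp [hQc]
        ring
      rw [← hlam, this, neg_smul, one_smul]
    · -- s = 0, u ≠ 0 : pure part of b vanishes
      have hd0 : d = 0 := by
        ext i
        have := E2 i
        rw [hs0, zero_mul, zero_add] at this
        have := mul_eq_zero.mp this
        simpa [hu0] using this
      have hQc : Qf CD c = -(u * u) := by
        rw [hs0, hd0, Qf_zero] at E1
        linear_combination E1
      refine ⟨u⁻¹ • vf CD c, 0, ?_⟩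
      rw [sq_smul_vf, mul_zero, add_zero, hQc]
      have : u⁻¹ ^ 2 * -(u * u) = -1 := by
        field_simp
      rw [this, neg_smul, one_smul]
  · -- s ≠ 0
    have hcd : c = (-(u / s)) • d := by
      ext i
      have := E2 i
      rw [Finsupp.smul_apply, smul_eq_mul]
      field_simp
      linear_combination this
    have hQc : Qf CD c = (u / s) ^ 2 * Qf CD d := by
      rw [hcd, Qf_smul]; ring
    have key : (s * s + u * u) * (s * s + Qf CD d) = 0 := by
      have : (s * s + u * u) * (s * s + Qf CD d)
          = s ^ 2 * ((s * s + Qf CD c) + (u * u + Qf CD d)) := by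
        rw [hQc]; field_simp; ring
      rw [this, E1, mul_zero]
    rcases mul_eq_zero.mp key with h0 | h0
    · refine ⟨(u / s) • (1 : A), 0, ?_⟩
      rw [sq_smul_one CD, mul_zero, add_zero]
      have : u / s * (u / s) = -1 := by
        field_simp
        linear_combination h0
      rw [this, neg_smul, one_smul]
    · refine ⟨s⁻¹ • vf CD d, 0, ?_⟩
      rw [sq_smul_vf, mul_zero, add_zero]
      have : s⁻¹ ^ 2 * Qf CD d = -1 := by
        have hQd : Qf CD d = -(s * s) := by linear_combination h0
        rw [hQd]
        field_simp
      rw [this, neg_smul, one_smul]
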